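/- For every n ≥ 0 and every real k, |Σ_{j=0}^{2^n − 1} η_j e^{−2πi j k}|² = 2^n · Π_{j=0}^{n−1} (1 − cos(2π 2^j k)). -/

import Mathlib

open Complex Real

/-- Binary digit sum. -/
def binDigitSum (n : ℕ) : ℕ := (Nat.digits 2 n).sum

/-- The ±1 Thue–Morse sequence, as a complex number. -/
noncomputable def tmC (n : ℕ) : ℂ := (-1) ^ (binDigitSum n)

lemma binDigitSum_two_mul (m : ℕ) : binDigitSum (2 * m) = binDigitSum m := by
  rcases Nat.eq_zero_or_pos m with h | h
  · simp [h]
  · unfold binDigitSum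
    rw [Nat.digits_def' (by norm_num : 1 < 2) (by omega)]
    have h1 : 2 * m % 2 = 0 := by omega
    have h2 : 2 * m / 2 = m := by omega
    rw [h1, h2]
    simp

lemma binDigitSum_two_mul_add_one (m : ℕ) :
    binDigitSum (2 * m + 1) = binDigitSum m + 1 := by
  unfold binDigitSum
  rw [Nat.digits_def' (by norm_num : 1 < 2) (by omega)]
  have h1 : (2 * m + 1) % 2 = 1 := by omega
  have h2 : (2 * m + 1) / 2 = m := by omega
  rw [h1, h2]
  simp [Nat.add_comm]

lemma binDigitSum_add_pow (n : ℕ) : ∀ j < 2 ^ n, binDigitSum (j + 2 ^ n) = binDigitSum j + 1 := by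
  induction n with
  | zero =>
    intro j hj
    interval_cases j
    norm_num [binDigitSum]
  | succ n ih =>
    intro j hj
    rcases Nat.even_or_odd j with ⟨q, hq⟩ | ⟨q, hq⟩
    · have hq2 : q < 2 ^ n := by
        have := pow_succ 2 n; omega
      have hsplit : j + 2 ^ (n + 1) = 2 * (q + 2 ^ n) := by
        rw [pow_succ]; omega
      rw [hsplit, binDigitSum_two_mul, ih q hq2, hq,
        show q + q = 2 * q from by ring, binDigitSum_two_mul]
    · have hq2 : q < 2 ^ n := by
        have := pow_succ 2 n; omega
      have hsplit : j + 2 ^ (n + 1) = 2 * (q + 2 ^ n) + 1 := by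
        rw [pow_succ]; omega
      rw [hsplit, binDigitSum_two_mul_add_one, ih q hq2, hq, binDigitSum_two_mul_add_one]

lemma tmC_add_pow {n j : ℕ} (hj : j < 2 ^ n) : tmC (j + 2 ^ n) = - tmC j := by
  unfold tmC
  rw [binDigitSum_add_pow n j hj, pow_succ]
  ring

lemma sum_step (n : ℕ) (k : ℝ) :
    (∑ j ∈ Finset.range (2 ^ (n + 1)), tmC j * Complex.exp (-2 * Real.pi * Complex.I * j * k))
      = (1 - Complex.exp (-2 * Real.pi * Complex.I * (2 ^ n : ℕ) * k)) *
        ∑ j ∈ Finset.range (2 ^ n), tmC j * Complex.exp (-2 * Real.pi * Complex.I * j * k) := by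
  rw [show 2 ^ (n + 1) = 2 ^ n + 2 ^ n from by ring, Finset.sum_range_add]
  have key : ∀ j ∈ Finset.range (2 ^ n),
      tmC (2 ^ n + j) * Complex.exp (-2 * Real.pi * Complex.I * (↑(2 ^ n + j) : ℂ) * k)
      = - (Complex.exp (-2 * Real.pi * Complex.I * (2 ^ n : ℕ) * k) *
          (tmC j * Complex.exp (-2 * Real.pi * Complex.I * j * k))) := by
    intro j hj
    rw [Finset.mem_range] at hj
    rw [show 2 ^ n + j = j + 2 ^ n from by ring, tmC_add_pow hj]
    rw [show (-2 * Real.pi * Complex.I * (↑(j + 2 ^ n) : ℂ) * k)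
        = (-2 * Real.pi * Complex.I * (j : ℂ) * k) +
          (-2 * Real.pi * Complex.I * ((2 ^ n : ℕ) : ℂ) * k) from by push_cast; ring,
      Complex.exp_add]
    ring
  rw [Finset.sum_congr rfl key, Finset.sum_neg_distrib, ← Finset.mul_sum]
  ring

lemma normSq_one_sub_exp (t : ℝ) :
    Complex.normSq (1 - Complex.exp ((t : ℂ) * Complex.I)) = 2 - 2 * Real.cos t := by
  rw [Complex.exp_mul_I, Complex.normSq_apply]
  simp [Complex.cos_ofReal_re, Complex.cos_ofReal_im, Complex.sin_ofReal_re,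
    Complex.sin_ofReal_im]
  nlinarith [Real.sin_sq_add_cos_sq t]

theorem stmt_8 (n : ℕ) (k : ℝ) :
    ‖(∑ j ∈ Finset.range (2 ^ n),
        tmC j * Complex.exp (-2 * Real.pi * Complex.I * j * k))‖ ^ 2 =
      2 ^ n * ∏ j ∈ Finset.range n, (1 - Real.cos (2 * Real.pi * 2 ^ j * k)) := by
  induction n with
  | zero =>
    simp [tmC, binDigitSum]
  | succ n ih =>
    rw [sum_step n k, norm_mul, mul_pow, ih, Finset.prod_range_succ]
    have harg : (-2 * Real.pi * Complex.I * ((2 ^ n : ℕ) : ℂ) * k)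
        = ((-(2 * Real.pi * 2 ^ n * k) : ℝ) : ℂ) * Complex.I := by
      push_cast; ring
    have h1 : ‖(1 - Complex.exp (((-(2 * Real.pi * 2 ^ n * k) : ℝ) : ℂ) * Complex.I))‖ ^ 2
        = 2 - 2 * Real.cos (-(2 * Real.pi * 2 ^ n * k)) := by
      rw [Complex.sq_norm, normSq_one_sub_exp]
    rw [harg, h1, Real.cos_neg]
    ring
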